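/- Let B be a finite-dimensional K-algebra such that B = A₀ ⊕ J(B) for a separable subalgebra A₀, and let A be a subalgebra of B containing J(B). Then the ring extension A ⊆ B is separable, i.e. the multiplication map B ⊗_A B → B is a split epimorphism of B-bimodules. -/

import Mathlib

open TensorProduct

/-- If `B = A₀ ⊕ J(B)` with `A₀` a separable subalgebra (given by a separability idempotent),
and `A` is a subalgebra containing `J(B)`, then the extension `A ⊆ B` is separable:
there is a separability element for the multiplication map `B ⊗_A B → B`, expressed via a
lift `E'` in `B ⊗[K] B` with `μ(E') = 1` and `bE' - E'b` lying in the kernel of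
`B ⊗[K] B → B ⊗_A B`. -/
theorem stmt13 {K B : Type*} [Field K] [Ring B] [Algebra K B] [FiniteDimensional K B]
    (A₀ A : Subalgebra K B)
    (hcompl : IsCompl (Subalgebra.toSubmodule A₀)
      (Submodule.restrictScalars K (Ideal.jacobson (⊥ : Ideal B))))
    (hsep : ∃ E : B ⊗[K] B,
      E ∈ Submodule.span K {x : B ⊗[K] B | ∃ a ∈ A₀, ∃ b ∈ A₀, x = a ⊗ₜ[K] b} ∧
      LinearMap.mul' K B E = 1 ∧
      ∀ a ∈ A₀, (a ⊗ₜ[K] (1 : B)) * E = E * ((1 : B) ⊗ₜ[K] a))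
    (hJA : ∀ x ∈ Ideal.jacobson (⊥ : Ideal B), x ∈ A) :
    ∃ E' : B ⊗[K] B, LinearMap.mul' K B E' = 1 ∧
      ∀ b : B, (b ⊗ₜ[K] (1 : B)) * E' - E' * ((1 : B) ⊗ₜ[K] b) ∈
        Submodule.span K {x : B ⊗[K] B |
          ∃ (b' c : B), ∃ a ∈ A, x = (b' * a) ⊗ₜ[K] c - b' ⊗ₜ[K] (a * c)} := by
  obtain ⟨E, -, hE1, hEcomm⟩ := hsep
  refine ⟨E, hE1, fun b => ?_⟩
  set N := Submodule.span K {x : B ⊗[K] B |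
      ∃ (b' c : B), ∃ a ∈ A, x = (b' * a) ⊗ₜ[K] c - b' ⊗ₜ[K] (a * c)} with hN
  -- generator membership
  have gen : ∀ (b' c : B) (a : B), a ∈ A → (b' * a) ⊗ₜ[K] c - b' ⊗ₜ[K] (a * c) ∈ N :=
    fun b' c a ha => Submodule.subset_span ⟨b', c, a, ha, rfl⟩
  -- decompose b = a₀ + j
  have hbtop : b ∈ (Subalgebra.toSubmodule A₀) ⊔
      (Submodule.restrictScalars K (Ideal.jacobson (⊥ : Ideal B))) := by
    rw [hcompl.sup_eq_top]; trivial
  obtain ⟨a₀, ha₀, j, hj, hbeq⟩ := Submodule.mem_sup.mp hbtop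
  rw [Submodule.restrictScalars_mem] at hj
  subst hbeq
  -- J is a two-sided ideal
  have hJr : ∀ x : B, j * x ∈ Ideal.jacobson (⊥ : Ideal B) := fun x =>
    Ideal.mul_mem_right x _ hj
  have hJl : ∀ x : B, x * j ∈ Ideal.jacobson (⊥ : Ideal B) := fun x =>
    Ideal.mul_mem_left _ x hj
  have key1 : ∀ z : B ⊗[K] B,
      (j ⊗ₜ[K] (1 : B)) * z - (1 : B) ⊗ₜ[K] (j * LinearMap.mul' K B z) ∈ N := by
    intro z
    induction z using TensorProduct.induction_on with
    | zero => simp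
    | tmul x y =>
      have := gen 1 y (j * x) (hJA _ (hJr x))
      simpa [mul_assoc] using this
    | add z₁ z₂ h₁ h₂ =>
      have := N.add_mem h₁ h₂
      rw [map_add, mul_add, mul_add, tmul_add] at *
      convert this using 1
      abel
  have key2 : ∀ z : B ⊗[K] B,
      z * ((1 : B) ⊗ₜ[K] j) - (LinearMap.mul' K B z * j) ⊗ₜ[K] (1 : B) ∈ N := by
    intro z
    induction z using TensorProduct.induction_on with
    | zero => simp
    | tmul x y =>
      have := N.neg_mem (gen x 1 (y * j) (hJA _ (hJl y)))
      simpa [mul_assoc] using this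
    | add z₁ z₂ h₁ h₂ =>
      have := N.add_mem h₁ h₂
      rw [map_add, add_mul, add_mul, add_tmul] at *
      convert this using 1
      abel
  have key3 : (1 : B) ⊗ₜ[K] j - j ⊗ₜ[K] (1 : B) ∈ N := by
    have := N.neg_mem (gen 1 1 j (hJA _ hj))
    simpa using this
  have h0 : (a₀ ⊗ₜ[K] (1 : B)) * E - E * ((1 : B) ⊗ₜ[K] a₀) = 0 :=
    sub_eq_zero.mpr (hEcomm a₀ ha₀)
  have hdecomp : ((a₀ + j) ⊗ₜ[K] (1 : B)) * E - E * ((1 : B) ⊗ₜ[K] (a₀ + j)) =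
      ((j ⊗ₜ[K] (1 : B)) * E - (1 : B) ⊗ₜ[K] (j * LinearMap.mul' K B E))
      + ((1 : B) ⊗ₜ[K] j - j ⊗ₜ[K] (1 : B))
      - (E * ((1 : B) ⊗ₜ[K] j) - (LinearMap.mul' K B E * j) ⊗ₜ[K] (1 : B)) := by
    rw [hE1, one_mul, mul_one, add_tmul, tmul_add, add_mul, mul_add]
    rw [← sub_eq_zero]
    rw [← sub_eq_zero] at h0
    rw [← h0]
    abel
  rw [hdecomp]
  exact N.sub_mem (N.add_mem (key1 E) key3) (key2 E)
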